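/- For n ≥ 1, the rational function ∏_{i=2}^{n} [2n+2-i]_q / [i]_q, where [d]_q = (q^d - 1)/(q - 1), is a polynomial in q with nonnegative integer coefficients; specifically it equals the generating polynomial of Dyck paths of semilength n by major index. -/

import Mathlib

/-- The number of up-steps among the first `k` steps of a path of length `2n`
encoded as `w : Fin (2n) → Bool` (`true` = up-step `(1,1)`, `false` = down-step `(1,-1)`). -/
def upSteps (n : ℕ) (w : Fin (2 * n) → Bool) (k : ℕ) : ℕ :=
  (Finset.univ.filter (fun i : Fin (2 * n) => (i : ℕ) < k ∧ w i = true)).card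

/-- The number of down-steps among the first `k` steps. -/
def downSteps (n : ℕ) (w : Fin (2 * n) → Bool) (k : ℕ) : ℕ :=
  (Finset.univ.filter (fun i : Fin (2 * n) => (i : ℕ) < k ∧ w i = false)).card

/-- `w` is a Dyck path of semilength `n`: every prefix has at least as many up-steps
as down-steps (the path stays weakly above the x-axis) and it ends at `(2n, 0)`. -/
def IsDyckPath (n : ℕ) (w : Fin (2 * n) → Bool) : Prop :=
  (∀ k ≤ 2 * n, downSteps n w k ≤ upSteps n w k) ∧ upSteps n w (2 * n) = n

instance (n : ℕ) : DecidablePred (IsDyckPath n) := fun _ => by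
  unfold IsDyckPath; infer_instance

/-- The major index of a Dyck path: the sum of the positions `i` (steps being numbered
`1, …, 2n`) such that step `i` is a down-step and step `i+1` is an up-step. -/
def dyckMajorIndex (n : ℕ) (w : Fin (2 * n) → Bool) : ℕ :=
  ∑ i ∈ Finset.univ.filter
      (fun i : Fin (2 * n) => w i = false ∧ ∃ j : Fin (2 * n), (j : ℕ) = i + 1 ∧ w j = true),
    ((i : ℕ) + 1)

/-- The generating polynomial of Dyck paths of semilength `n` by major index. -/
noncomputable def dyckMajPoly (n : ℕ) : Polynomial ℕ :=
  ∑ w ∈ Finset.univ.filter (IsDyckPath n), Polynomial.X ^ dyckMajorIndex n w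


open Polynomial Finset

noncomputable def pq (d : ℕ) : Polynomial ℚ := ∑ j ∈ range d, X ^ j

lemma pq_zero : pq 0 = 0 := by simp [pq]
lemma pq_one : pq 1 = 1 := by simp [pq]

lemma pq_add (u v : ℕ) : pq (u + v) = pq u + X ^ u * pq v := by
  induction v with
  | zero => simp [pq_zero]
  | succ v ih =>
      rw [show u + (v+1) = (u+v)+1 from rfl]
      unfold pq at *
      rw [Finset.sum_range_succ, ih, Finset.sum_range_succ]
      ring

lemma pq_succ (d : ℕ) : pq (d + 1) = 1 + X * pq d := by
  have := pq_add 1 d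
  rw [add_comm 1 d] at this
  simpa [pq_one] using this

lemma pq_ne_zero {d : ℕ} (hd : d ≠ 0) : pq d ≠ 0 := by
  obtain ⟨e, rfl⟩ := Nat.exists_eq_succ_of_ne_zero hd
  intro h
  have := congrArg (Polynomial.eval 0) h
  simp [pq_succ] at this

noncomputable def gb : ℕ → ℕ → Polynomial ℚ
  | 0, 0 => 1
  | 0, _+1 => 0
  | _+1, 0 => 1
  | m+1, b+1 => gb m (b+1) + X ^ (m - b) * gb m b

lemma gb_zero_right (m : ℕ) : gb m 0 = 1 := by cases m <;> rfl

lemma gb_eq_zero : ∀ {m b : ℕ}, m < b → gb m b = 0 := by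
  intro m
  induction m with
  | zero => intro b hb; obtain ⟨c, rfl⟩ := Nat.exists_eq_succ_of_ne_zero (by omega : b ≠ 0); rfl
  | succ m ih =>
      intro b hb
      obtain ⟨c, rfl⟩ := Nat.exists_eq_succ_of_ne_zero (by omega : b ≠ 0)
      show gb m (c+1) + X ^ (m - c) * gb m c = 0
      rw [ih (by omega), ih (by omega)]
      ring

noncomputable def fac (b : ℕ) : Polynomial ℚ := ∏ i ∈ range b, pq (i + 1)

lemma fac_succ (b : ℕ) : fac (b + 1) = fac b * pq (b + 1) := Finset.prod_range_succ _ _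

lemma fac_ne_zero (b : ℕ) : fac b ≠ 0 :=
  Finset.prod_ne_zero_iff.mpr (fun i _ => pq_ne_zero (Nat.succ_ne_zero i))

lemma prodpq_congr {b : ℕ} {f g : ℕ → ℕ} (h : ∀ i < b, f i = g i) :
    ∏ i ∈ range b, pq (f i) = ∏ i ∈ range b, pq (g i) :=
  Finset.prod_congr rfl (fun i hi => by rw [h i (Finset.mem_range.mp hi)])

lemma gb_fact : ∀ m b : ℕ, b ≤ m → gb m b * fac b = ∏ i ∈ range b, pq (m - b + 1 + i) := by
  intro m
  induction m with
  | zero => intro b hb; interval_cases b; simp [gb_zero_right, fac]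
  | succ m ih =>
      intro b hb
      match b with
      | 0 => simp [gb_zero_right, fac]
      | b+1 =>
        rcases Nat.lt_or_ge b m with hbm | hbm
        · -- b+1 ≤ m
          obtain ⟨c, rfl⟩ : ∃ c, m = b + 1 + c := ⟨m - (b+1), by omega⟩
          have ih1 := ih (b+1) (by omega)
          have ih2 := ih b (by omega)
          rw [prodpq_congr (fun i _ => by omega : ∀ i < b+1, b+1+c - (b+1) + 1 + i = c+1+i)] at ih1
          rw [prodpq_congr (fun i _ => by omega : ∀ i < b, b+1+c - b + 1 + i = c+2+i)] at ih2
          show (gb (b+1+c) (b+1) + X ^ (b+1+c - b) * gb (b+1+c) b) * fac (b+1)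
              = ∏ i ∈ range (b+1), pq (b+1+c+1 - (b+1) + 1 + i)
          rw [prodpq_congr (fun i _ => by omega : ∀ i < b+1, b+1+c+1 - (b+1) + 1 + i = c+2+i)]
          rw [show b+1+c-b = c+1 by omega]
          have e1 : ∏ i ∈ range (b+1), pq (c+1+i)
              = (∏ i ∈ range b, pq (c+2+i)) * pq (c+1) := by
            rw [Finset.prod_range_succ']
            rw [prodpq_congr (fun i _ => by omega : ∀ i < b, c+1+(i+1) = c+2+i)]
          have e2 : ∏ i ∈ range (b+1), pq (c+2+i)
              = (∏ i ∈ range b, pq (c+2+i)) * pq (c+2+b) := Finset.prod_range_succ _ _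
          have e3 : pq (c+2+b) = pq (c+1) + X ^ (c+1) * pq (b+1) := by
            rw [show c+2+b = (c+1)+(b+1) by omega]; exact pq_add _ _
          rw [e1] at ih1
          rw [fac_succ] at ih1 ⊢
          rw [e2, e3]
          linear_combination ih1 + X ^ (c+1) * pq (b+1) * ih2
        · -- b = m
          have hbm' : b = m := by omega
          subst hbm'
          show (gb b (b+1) + X ^ (b - b) * gb b b) * fac (b+1)
              = ∏ i ∈ range (b+1), pq (b+1 - (b+1) + 1 + i)
          rw [gb_eq_zero (by omega), Nat.sub_self, pow_zero]
          have ihb := ih b le_rfl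
          rw [prodpq_congr (fun i _ => by omega : ∀ i < b, b - b + 1 + i = i+1)] at ihb
          rw [prodpq_congr (fun i _ => by omega : ∀ i < b+1, b+1 - (b+1) + 1 + i = i+1)]
          rw [Finset.prod_range_succ, ← ihb, fac_succ]
          ring

noncomputable def scf : ℕ → ℕ → Polynomial ℚ
  | _, 0 => 1
  | m, b+1 => gb m (b+1) - X * gb m b

lemma scf_zero (m : ℕ) : scf m 0 = 1 := rfl

lemma scf_fact (b e : ℕ) :
    scf (2*b+2+e) (b+1) * fac (b+1)
      = (∏ i ∈ range b, pq (b+e+3+i)) * (1 + X ^ (b+2) * pq e) := by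
  show (gb (2*b+2+e) (b+1) - X * gb (2*b+2+e) b) * fac (b+1) = _
  have g1 := gb_fact (2*b+2+e) (b+1) (by omega)
  have g2 := gb_fact (2*b+2+e) b (by omega)
  rw [prodpq_congr (fun i _ => by omega : ∀ i < b+1, 2*b+2+e - (b+1) + 1 + i = b+e+2+i)] at g1
  rw [prodpq_congr (fun i _ => by omega : ∀ i < b, 2*b+2+e - b + 1 + i = b+e+3+i)] at g2
  have e1 : ∏ i ∈ range (b+1), pq (b+e+2+i)
      = (∏ i ∈ range b, pq (b+e+3+i)) * pq (b+e+2) := by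
    rw [Finset.prod_range_succ']
    rw [prodpq_congr (fun i _ => by omega : ∀ i < b, b+e+2+(i+1) = b+e+3+i)]
  have e3 : pq (b+e+2) = 1 + X * pq (b+1) + X ^ (b+2) * pq e := by
    rw [show b+e+2 = (b+2)+e by omega, pq_add, pq_succ]
  rw [e1, e3] at g1
  rw [fac_succ] at g1 ⊢
  linear_combination g1 - X * pq (b+1) * g2

lemma pq_mul (a : ℕ) : pq a * (X - 1) = X ^ a - 1 := geom_sum_mul X a

lemma pq_two : pq 2 = 1 + X := by
  simp [pq, Finset.sum_range_succ]

lemma pq_four : pq 4 = 1 + X + X^2 + X^3 := by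
  simp [pq, Finset.sum_range_succ]

lemma pq_five : pq 5 = 1 + X + X^2 + X^3 + X^4 := by
  simp [pq, Finset.sum_range_succ]

lemma starstar (d e : ℕ) :
    pq (2*d+e+5) * (1 + X^(d+3) * pq (e+1)) * pq (2*d+e+4)
  = pq (d+e+4) * (1 + X^(d+3) * pq e) * pq (2*d+e+4)
    + (X^(2*d+e+4) - 1) * (pq (d+e+4) * (1 + X^(d+2) * pq (e+1)) * pq (d+2))
    + pq (2*d+e+4) * (1 + X^(d+2) * pq (e+2)) * pq (d+2) := by
  have hu : (X : Polynomial ℚ)^d = (X-1) * pq d + 1 := by linear_combination -pq_mul d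
  have hv : (X : Polynomial ℚ)^e = (X-1) * pq e + 1 := by linear_combination -pq_mul e
  have e1 : pq (e+1) = pq e + X^e := by rw [pq_add e 1, pq_one, mul_one]
  have e2 : pq (e+2) = pq e + X^e * pq 2 := pq_add e 2
  have e4 : pq (e+4) = pq e + X^e * pq 4 := pq_add e 4
  have e5 : pq (e+5) = pq e + X^e * pq 5 := pq_add e 5
  have a4 : pq (d+e+4) = pq d + X^d * pq (e+4) := by
    rw [show d+e+4 = d+(e+4) by ring]; exact pq_add d (e+4)
  have a5 : pq (d+e+5) = pq d + X^d * pq (e+5) := by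
    rw [show d+e+5 = d+(e+5) by ring]; exact pq_add d (e+5)
  have b4 : pq (2*d+e+4) = pq d + X^d * pq (d+e+4) := by
    rw [show 2*d+e+4 = d+(d+e+4) by ring]; exact pq_add d (d+e+4)
  have b5 : pq (2*d+e+5) = pq d + X^d * pq (d+e+5) := by
    rw [show 2*d+e+5 = d+(d+e+5) by ring]; exact pq_add d (d+e+5)
  have c2 : pq (d+2) = pq d + X^d * pq 2 := pq_add d 2
  rw [b5, b4, a5, a4, e5, e4, e2, e1, c2, pq_two, pq_four, pq_five]
  rw [pow_add X d 3, pow_add X d 2,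
    show 2*d+e+4 = d+(d+(e+4)) by ring, pow_add X d (d+(e+4)), pow_add X d (e+4),
    pow_add X e 4]
  rw [hu, hv]
  ring

lemma I1gen (d e : ℕ) :
    scf (2*d+e+5) (d+2)
      = scf (2*d+e+4) (d+2) + (X^(2*d+e+4) - 1) * scf (2*d+e+3) (d+1)
        + scf (2*d+e+4) (d+1) := by
  have hK : fac (d+1) * pq (d+2) * pq (2*d+e+4) ≠ 0 :=
    mul_ne_zero (mul_ne_zero (fac_ne_zero _) (pq_ne_zero (by omega))) (pq_ne_zero (by omega))
  apply mul_right_cancel₀ hK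
  have f1 := scf_fact (d+1) (e+1)
  rw [show 2*(d+1)+2+(e+1) = 2*d+e+5 by ring, show (d+1)+1 = d+2 by ring,
    show (d+1)+2 = d+3 by ring,
    prodpq_congr (fun i _ => by omega : ∀ i < d+1, (d+1)+(e+1)+3+i = d+e+5+i)] at f1
  have f2 := scf_fact (d+1) e
  rw [show 2*(d+1)+2+e = 2*d+e+4 by ring, show (d+1)+1 = d+2 by ring,
    show (d+1)+2 = d+3 by ring,
    prodpq_congr (fun i _ => by omega : ∀ i < d+1, (d+1)+e+3+i = d+e+4+i)] at f2
  have f3 := scf_fact d (e+1)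
  rw [show 2*d+2+(e+1) = 2*d+e+3 by ring,
    prodpq_congr (fun i _ => by omega : ∀ i < d, d+(e+1)+3+i = d+e+4+i)] at f3
  have f4 := scf_fact d (e+2)
  rw [show 2*d+2+(e+2) = 2*d+e+4 by ring,
    prodpq_congr (fun i _ => by omega : ∀ i < d, d+(e+2)+3+i = d+e+5+i)] at f4
  have hH1 : ∏ i ∈ range (d+1), pq (d+e+5+i)
      = (∏ i ∈ range d, pq (d+e+5+i)) * pq (2*d+e+5) := by
    rw [Finset.prod_range_succ, show d+e+5+d = 2*d+e+5 by ring]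
  have hH2 : ∏ i ∈ range (d+1), pq (d+e+4+i)
      = pq (d+e+4) * ∏ i ∈ range d, pq (d+e+5+i) := by
    rw [Finset.prod_range_succ',
      prodpq_congr (fun i _ => by omega : ∀ i < d, d+e+4+(i+1) = d+e+5+i),
      show d+e+4+0 = d+e+4 by ring, mul_comm]
  have hH3 : (∏ i ∈ range d, pq (d+e+4+i)) * pq (2*d+e+4)
      = pq (d+e+4) * ∏ i ∈ range d, pq (d+e+5+i) := by
    rw [← hH2, Finset.prod_range_succ, show d+e+4+d = 2*d+e+4 by ring]
  rw [hH1] at f1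
  rw [hH2] at f2
  rw [fac_succ (d+1)] at f1 f2
  have star := starstar d e
  linear_combination pq (2*d+e+4) * f1 - pq (2*d+e+4) * f2
    - ((X^(2*d+e+4) - 1) * pq (d+2) * pq (2*d+e+4)) * f3
    - (pq (d+2) * pq (2*d+e+4)) * f4
    - ((X^(2*d+e+4) - 1) * pq (d+2) * (1 + X^(d+2) * pq (e+1))) * hH3
    + (∏ i ∈ range d, pq (d+e+5+i)) * star

lemma I2gen (d : ℕ) : scf (2*d+4) (d+2) = scf (2*d+3) (d+1) := by
  have hK : fac (d+1) * pq (d+2) ≠ 0 :=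
    mul_ne_zero (fac_ne_zero _) (pq_ne_zero (by omega))
  apply mul_right_cancel₀ hK
  have f1 := scf_fact (d+1) 0
  rw [show 2*(d+1)+2+0 = 2*d+4 by ring, show (d+1)+1 = d+2 by ring,
    prodpq_congr (fun i _ => by omega : ∀ i < d+1, (d+1)+0+3+i = d+4+i), pq_zero] at f1
  have f2 := scf_fact d 1
  rw [show 2*d+2+1 = 2*d+3 by ring,
    prodpq_congr (fun i _ => by omega : ∀ i < d, d+1+3+i = d+4+i), pq_one] at f2
  have hP : ∏ i ∈ range (d+1), pq (d+4+i)
      = (∏ i ∈ range d, pq (d+4+i)) * pq (2*d+4) := by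
    rw [Finset.prod_range_succ, show d+4+d = 2*d+4 by ring]
  rw [hP] at f1
  rw [fac_succ (d+1)] at f1
  have hq : pq (2*d+4) = pq (d+2) + X^(d+2) * pq (d+2) := by
    rw [show 2*d+4 = (d+2)+(d+2) by ring]; exact pq_add _ _
  linear_combination f1 - pq (d+2) * f2 + (∏ i ∈ range d, pq (d+4+i)) * hq

lemma gb_succ (m b : ℕ) : gb (m+1) (b+1) = gb m (b+1) + X^(m-b) * gb m b := rfl
lemma scf_succ (m b : ℕ) : scf m (b+1) = gb m (b+1) - X * gb m b := rfl
lemma gb00 : gb 0 0 = 1 := rfl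
lemma gb01 : gb 0 1 = 0 := rfl

lemma I1' (m b : ℕ) (hb : 1 ≤ b) (hm : 2*b ≤ m) :
    scf (m+1) b = scf m b + (X^m - 1) * scf (m-1) (b-1) + scf m (b-1) := by
  rcases b with _ | b
  · omega
  rcases b with _ | d
  · obtain ⟨e, rfl⟩ : ∃ e, m = e + 2 := ⟨m - 2, by omega⟩
    rw [show e+2-1 = e+1 by omega]
    show scf (e+2+1) (0+1) = scf (e+2) (0+1) + (X^(e+2)-1) * scf (e+1) (1-1) + scf (e+2) 0
    rw [show (1:ℕ)-1 = 0 from rfl, scf_succ, scf_succ, scf_zero, scf_zero,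
      show e+2+1 = (e+2)+1 from rfl, gb_succ, gb_zero_right, gb_zero_right, Nat.sub_zero]
    ring
  · obtain ⟨e, rfl⟩ : ∃ e, m = 2*d + e + 4 := ⟨m - (2*d+4), by omega⟩
    have h := I1gen d e
    rw [show 2*d+e+4+1 = 2*d+e+5 by ring, show 2*d+e+4-1 = 2*d+e+3 by omega,
      show d+1+1 = d+2 by ring, show d+2-1 = d+1 by omega]
    exact h

lemma I2' (b : ℕ) (hb : 1 ≤ b) : scf (2*b) b = scf (2*b-1) (b-1) := by
  rcases b with _ | b
  · omega
  rcases b with _ | d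
  · show scf 2 1 = scf 1 0
    have g11 : gb 1 1 = 1 := by
      have g := gb_succ 0 0
      norm_num [gb00, gb01] at g
      exact g
    have g21 : gb 2 1 = 1 + X := by
      have g := gb_succ 1 0
      norm_num [g11, gb_zero_right] at g
      linear_combination g
    have s := scf_succ 2 0
    rw [show (0:ℕ)+1 = 1 from rfl] at s
    rw [s, scf_zero, g21, gb_zero_right]; ring
  · have h := I2gen d
    rw [show 2*(d+1+1)-1 = 2*d+3 by omega, show d+1+1-1 = d+1 by omega,
      show 2*(d+1+1) = 2*d+4 by ring, show d+1+1 = d+2 by ring]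
    exact h

lemma diamond (r : ℕ) : scf (2*(r+1)) (r+1) * fac (r+1) = gb (2*(r+1)) r * fac r := by
  have f := scf_fact r 0
  rw [show 2*r+2+0 = 2*(r+1) by ring, pq_zero] at f
  have g := gb_fact (2*(r+1)) r (by omega)
  rw [prodpq_congr (fun i _ => by omega : ∀ i < r, 2*(r+1) - r + 1 + i = r+0+3+i)] at g
  linear_combination f - g

def ucnt (m : ℕ) (w : Fin m → Bool) (k : ℕ) : ℕ :=
  (Finset.univ.filter (fun i : Fin m => (i : ℕ) < k ∧ w i = true)).card

def dcnt (m : ℕ) (w : Fin m → Bool) (k : ℕ) : ℕ :=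
  (Finset.univ.filter (fun i : Fin m => (i : ℕ) < k ∧ w i = false)).card

def bal (m : ℕ) (w : Fin m → Bool) : Prop := ∀ k ≤ m, dcnt m w k ≤ ucnt m w k

def mj (m : ℕ) (w : Fin m → Bool) : ℕ :=
  ∑ i ∈ Finset.univ.filter
      (fun i : Fin m => w i = false ∧ ∃ j : Fin m, (j : ℕ) = i + 1 ∧ w j = true),
    ((i : ℕ) + 1)

def endD (m : ℕ) (w : Fin m → Bool) : Prop := ¬ ∃ i : Fin m, (i : ℕ) + 1 = m ∧ w i = true

instance (m : ℕ) (w : Fin m → Bool) : Decidable (bal m w) := by unfold bal; infer_instance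
instance (m : ℕ) (w : Fin m → Bool) : Decidable (endD m w) := by unfold endD; infer_instance

lemma ucnt_eq_sum (m : ℕ) (w : Fin m → Bool) (k : ℕ) :
    ucnt m w k = ∑ i : Fin m, if ((i : ℕ) < k ∧ w i = true) then 1 else 0 :=
  Finset.card_filter _ _

lemma dcnt_eq_sum (m : ℕ) (w : Fin m → Bool) (k : ℕ) :
    dcnt m w k = ∑ i : Fin m, if ((i : ℕ) < k ∧ w i = false) then 1 else 0 :=
  Finset.card_filter _ _

lemma ucnt_snoc_of_le {m k : ℕ} (hk : k ≤ m) (w : Fin m → Bool) (c : Bool) :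
    ucnt (m+1) (Fin.snoc w c) k = ucnt m w k := by
  rw [ucnt_eq_sum, ucnt_eq_sum, Fin.sum_univ_castSucc]
  simp only [Fin.snoc_castSucc, Fin.coe_castSucc, Fin.snoc_last, Fin.val_last]
  have h : ¬ ((m : ℕ) < k) := by omega
  simp [h]

lemma dcnt_snoc_of_le {m k : ℕ} (hk : k ≤ m) (w : Fin m → Bool) (c : Bool) :
    dcnt (m+1) (Fin.snoc w c) k = dcnt m w k := by
  rw [dcnt_eq_sum, dcnt_eq_sum, Fin.sum_univ_castSucc]
  simp only [Fin.snoc_castSucc, Fin.coe_castSucc, Fin.snoc_last, Fin.val_last]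
  have h : ¬ ((m : ℕ) < k) := by omega
  simp [h]

lemma ucnt_snoc_top (m : ℕ) (w : Fin m → Bool) (c : Bool) :
    ucnt (m+1) (Fin.snoc w c) (m+1) = ucnt m w m + (if c = true then 1 else 0) := by
  rw [ucnt_eq_sum, ucnt_eq_sum, Fin.sum_univ_castSucc]
  simp only [Fin.snoc_castSucc, Fin.coe_castSucc, Fin.snoc_last, Fin.val_last]
  congr 1
  · apply Finset.sum_congr rfl
    intro i _
    exact if_congr (by simp [i.isLt, Nat.lt_succ_of_lt i.isLt]) rfl rfl
  · simp

lemma dcnt_snoc_top (m : ℕ) (w : Fin m → Bool) (c : Bool) :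
    dcnt (m+1) (Fin.snoc w c) (m+1) = dcnt m w m + (if c = false then 1 else 0) := by
  rw [dcnt_eq_sum, dcnt_eq_sum, Fin.sum_univ_castSucc]
  simp only [Fin.snoc_castSucc, Fin.coe_castSucc, Fin.snoc_last, Fin.val_last]
  congr 1
  · apply Finset.sum_congr rfl
    intro i _
    exact if_congr (by simp [i.isLt, Nat.lt_succ_of_lt i.isLt]) rfl rfl
  · simp

lemma cnt_total (m : ℕ) (w : Fin m → Bool) : ucnt m w m + dcnt m w m = m := by
  rw [ucnt_eq_sum, dcnt_eq_sum, ← Finset.sum_add_distrib]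
  have hpt : ∀ i ∈ (Finset.univ : Finset (Fin m)),
      ((if ((i : ℕ) < m ∧ w i = true) then 1 else 0)
        + (if ((i : ℕ) < m ∧ w i = false) then 1 else 0)) = 1 := by
    intro i _
    cases h : w i <;> simp [h, i.isLt]
  rw [Finset.sum_congr rfl hpt]
  simp

lemma bal_snoc (m : ℕ) (w : Fin m → Bool) (c : Bool) :
    bal (m+1) (Fin.snoc w c) ↔ bal m w ∧
      dcnt (m+1) (Fin.snoc w c) (m+1) ≤ ucnt (m+1) (Fin.snoc w c) (m+1) := by
  constructor
  · intro h
    refine ⟨fun k hk => ?_, h (m+1) le_rfl⟩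
    rw [← ucnt_snoc_of_le hk, ← dcnt_snoc_of_le hk]
    exact h k (by omega)
  · rintro ⟨h1, h2⟩ k hk
    rcases Nat.lt_or_ge k (m+1) with hk' | hk'
    · rw [ucnt_snoc_of_le (by omega), dcnt_snoc_of_le (by omega)]
      exact h1 k (by omega)
    · have : k = m + 1 := by omega
      subst this
      exact h2

lemma mj_eq_sum (m : ℕ) (w : Fin m → Bool) :
    mj m w = ∑ i : Fin m,
      if (w i = false ∧ ∃ j : Fin m, (j : ℕ) = (i : ℕ) + 1 ∧ w j = true)
      then ((i : ℕ) + 1) else 0 :=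
  Finset.sum_filter _ _

lemma endD_iff (m : ℕ) (w : Fin (m+1) → Bool) :
    endD (m+1) w ↔ w (Fin.last m) = false := by
  unfold endD
  constructor
  · intro h
    rcases Bool.eq_false_or_eq_true (w (Fin.last m)) with ht | hf
    · exact absurd ⟨Fin.last m, by simp [Fin.val_last], ht⟩ h
    · exact hf
  · rintro hf ⟨i, hi, ht⟩
    have : i = Fin.last m := Fin.ext (by simp [Fin.val_last]; omega)
    rw [this, hf] at ht
    exact Bool.false_ne_true ht

lemma endD_snoc (m : ℕ) (w : Fin m → Bool) (c : Bool) :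
    endD (m+1) (Fin.snoc w c) ↔ c = false := by
  rw [endD_iff, Fin.snoc_last]

lemma mj_snoc (m : ℕ) (w : Fin m → Bool) (c : Bool) :
    mj (m+1) (Fin.snoc w c) = mj m w + (if (endD m w ∧ c = true) then m else 0) := by
  rw [mj_eq_sum, mj_eq_sum, Fin.sum_univ_castSucc]
  -- last term is 0
  have hlast : (if ((Fin.snoc w c : Fin (m+1) → Bool) (Fin.last m) = false ∧
      ∃ j : Fin (m+1), (j : ℕ) = ((Fin.last m : Fin (m+1)) : ℕ) + 1 ∧ (Fin.snoc w c : Fin (m+1) → Bool) j = true)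
      then (((Fin.last m : Fin (m+1)) : ℕ) + 1) else 0) = 0 := by
    apply if_neg
    rintro ⟨-, j, hj, -⟩
    have := j.isLt
    simp [Fin.val_last] at hj
    omega
  rw [hlast, add_zero]
  -- pointwise split
  have hpt : ∀ i : Fin m,
      (if ((Fin.snoc w c : Fin (m+1) → Bool) i.castSucc = false ∧
          ∃ j : Fin (m+1), (j : ℕ) = ((i.castSucc : Fin (m+1)) : ℕ) + 1 ∧ (Fin.snoc w c : Fin (m+1) → Bool) j = true)
        then (((i.castSucc : Fin (m+1)) : ℕ) + 1) else 0)
      = (if (w i = false ∧ ∃ j : Fin m, (j : ℕ) = (i : ℕ) + 1 ∧ w j = true)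
          then ((i : ℕ) + 1) else 0)
        + (if ((i : ℕ) + 1 = m ∧ w i = false ∧ c = true) then ((i : ℕ) + 1) else 0) := by
    intro i
    simp only [Fin.snoc_castSucc, Fin.coe_castSucc]
    rcases Nat.lt_or_ge ((i : ℕ) + 1) m with h | h
    · rw [if_neg (by omega : ¬((i : ℕ) + 1 = m ∧ w i = false ∧ c = true)), add_zero]
      apply if_congr _ rfl rfl
      constructor
      · rintro ⟨hwf, j, hj, hw⟩
        refine ⟨hwf, ⟨(i : ℕ) + 1, h⟩, rfl, ?_⟩
        have : j = Fin.castSucc ⟨(i : ℕ) + 1, h⟩ := Fin.ext (by simpa using hj)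
        rw [this, Fin.snoc_castSucc] at hw
        exact hw
      · rintro ⟨hwf, j, hj, hw⟩
        refine ⟨hwf, j.castSucc, ?_, ?_⟩
        · simpa using hj
        · rwa [Fin.snoc_castSucc]
    · have him : (i : ℕ) + 1 = m := by have := i.isLt; omega
      have hiffA : (w i = false ∧
          ∃ j : Fin (m+1), (j : ℕ) = (i : ℕ) + 1 ∧ (Fin.snoc w c : Fin (m+1) → Bool) j = true)
          ↔ (w i = false ∧ c = true) := by
        constructor
        · rintro ⟨hwf, j, hj, hw⟩
          have : j = Fin.last m := Fin.ext (by simp [Fin.val_last]; omega)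
          rw [this, Fin.snoc_last] at hw
          exact ⟨hwf, hw⟩
        · rintro ⟨hwf, hc⟩
          exact ⟨hwf, Fin.last m, by simp [Fin.val_last]; omega, by rwa [Fin.snoc_last]⟩
      have hB : ¬ (w i = false ∧ ∃ j : Fin m, (j : ℕ) = (i : ℕ) + 1 ∧ w j = true) := by
        rintro ⟨-, j, hj, -⟩
        have := j.isLt
        omega
      rw [if_neg hB, zero_add]
      rw [if_congr hiffA rfl rfl, if_congr (show ((i:ℕ)+1 = m ∧ w i = false ∧ c = true)
        ↔ (w i = false ∧ c = true) by tauto) rfl rfl]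
  rw [Finset.sum_congr rfl (fun i _ => hpt i), Finset.sum_add_distrib]
  congr 1
  -- the correction sum
  cases m with
  | zero => simp
  | succ m' =>
      rw [Finset.sum_eq_single (Fin.last m')]
      · simp only [endD_iff]
        rcases Bool.eq_false_or_eq_true (w (Fin.last m')) with ht | hf
        · simp [ht, Fin.val_last]
        · simp [hf, Fin.val_last]
      · intro i _ hne
        apply if_neg
        rintro ⟨hi, -, -⟩
        exact hne (Fin.ext (by simp [Fin.val_last]; omega))
      · intro h
        exact absurd (Finset.mem_univ _) h

noncomputable def SS (m b : ℕ) : Polynomial ℚ :=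
  ∑ w ∈ Finset.univ.filter (fun w : Fin m → Bool => bal m w ∧ dcnt m w m = b), X ^ mj m w

noncomputable def SD (m b : ℕ) : Polynomial ℚ :=
  ∑ w ∈ Finset.univ.filter
      (fun w : Fin m → Bool => (bal m w ∧ dcnt m w m = b) ∧ endD m w), X ^ mj m w

lemma SS_eq_sum (m b : ℕ) : SS m b
    = ∑ w : Fin m → Bool, if (bal m w ∧ dcnt m w m = b) then (X : Polynomial ℚ) ^ mj m w else 0 :=
  Finset.sum_filter _ _

lemma SD_eq_sum (m b : ℕ) : SD m b
    = ∑ w : Fin m → Bool,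
        if ((bal m w ∧ dcnt m w m = b) ∧ endD m w) then (X : Polynomial ℚ) ^ mj m w else 0 :=
  Finset.sum_filter _ _

lemma SS_of_lt {m b : ℕ} (h : m < 2 * b) : SS m b = 0 := by
  rw [SS_eq_sum]
  apply Finset.sum_eq_zero
  intro w _
  apply if_neg
  rintro ⟨hb, hd⟩
  have h1 := hb m le_rfl
  have h2 := cnt_total m w
  omega

lemma SD_of_lt {m b : ℕ} (h : m < 2 * b) : SD m b = 0 := by
  rw [SD_eq_sum]
  apply Finset.sum_eq_zero
  intro w _
  apply if_neg
  rintro ⟨⟨hb, hd⟩, -⟩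
  have h1 := hb m le_rfl
  have h2 := cnt_total m w
  omega

lemma dcnt_zero (w : Fin 0 → Bool) (k : ℕ) : dcnt 0 w k = 0 := by
  rw [dcnt_eq_sum]; simp

lemma ucnt_zero (w : Fin 0 → Bool) (k : ℕ) : ucnt 0 w k = 0 := by
  rw [ucnt_eq_sum]; simp

lemma SS_zero (b : ℕ) : SS 0 b = if b = 0 then 1 else 0 := by
  have key : ∀ w : Fin 0 → Bool,
      (if bal 0 w ∧ dcnt 0 w 0 = b then (X : Polynomial ℚ) ^ mj 0 w else 0)
        = if b = 0 then 1 else 0 := by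
    intro w
    have hb : bal 0 w := fun k _ => by rw [dcnt_zero, ucnt_zero]
    have hm : mj 0 w = 0 := by rw [mj_eq_sum]; simp
    rw [hm, dcnt_zero]
    by_cases h : b = 0
    · subst h; rw [if_pos ⟨hb, rfl⟩, if_pos rfl, pow_zero]
    · rw [if_neg (by tauto), if_neg h]
  rw [SS_eq_sum, Fintype.sum_unique]
  exact key _

lemma SD_zero (b : ℕ) : SD 0 b = if b = 0 then 1 else 0 := by
  have key : ∀ w : Fin 0 → Bool,
      (if (bal 0 w ∧ dcnt 0 w 0 = b) ∧ endD 0 w then (X : Polynomial ℚ) ^ mj 0 w else 0)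
        = if b = 0 then 1 else 0 := by
    intro w
    have hb : bal 0 w := fun k _ => by rw [dcnt_zero, ucnt_zero]
    have hm : mj 0 w = 0 := by rw [mj_eq_sum]; simp
    have he : endD 0 w := by rintro ⟨i, -, -⟩; exact absurd i.isLt (by omega)
    rw [hm, dcnt_zero]
    by_cases h : b = 0
    · subst h; rw [if_pos ⟨⟨hb, rfl⟩, he⟩, if_pos rfl, pow_zero]
    · rw [if_neg (by tauto), if_neg h]
  rw [SD_eq_sum, Fintype.sum_unique]
  exact key _

lemma sum_snoc_split (m : ℕ) (f : (Fin (m+1) → Bool) → Polynomial ℚ) :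
    ∑ w : Fin (m+1) → Bool, f w
      = (∑ w : Fin m → Bool, f (Fin.snoc w true))
        + (∑ w : Fin m → Bool, f (Fin.snoc w false)) := by
  rw [← Fintype.sum_equiv (Fin.snocEquiv (fun _ => Bool))
      (fun p => f ((Fin.snocEquiv (fun _ => Bool)) p)) f (fun p => rfl)]
  rw [Fintype.sum_prod_type, Fintype.sum_bool]
  rfl

lemma SD_succ (m b : ℕ) :
    SD (m+1) b = if 1 ≤ b ∧ 2*b ≤ m+1 then SS m (b-1) else 0 := by
  rw [SD_eq_sum, sum_snoc_split]
  have htrue : (∑ w : Fin m → Bool,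
      if ((bal (m+1) (Fin.snoc w true) ∧ dcnt (m+1) (Fin.snoc w true) (m+1) = b)
          ∧ endD (m+1) (Fin.snoc w true))
        then (X : Polynomial ℚ) ^ mj (m+1) (Fin.snoc w true) else 0) = 0 := by
    apply Finset.sum_eq_zero
    intro w _
    apply if_neg
    rintro ⟨-, he⟩
    rw [endD_snoc] at he
    exact absurd he (by simp)
  rw [htrue, zero_add]
  have hpt : ∀ w : Fin m → Bool,
      (if ((bal (m+1) (Fin.snoc w false) ∧ dcnt (m+1) (Fin.snoc w false) (m+1) = b)
          ∧ endD (m+1) (Fin.snoc w false))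
        then (X : Polynomial ℚ) ^ mj (m+1) (Fin.snoc w false) else 0)
      = (if (bal m w ∧ dcnt m w m + 1 ≤ ucnt m w m ∧ dcnt m w m + 1 = b)
          then (X : Polynomial ℚ) ^ mj m w else 0) := by
    intro w
    rw [mj_snoc]
    rw [show (if (endD m w ∧ (false : Bool) = true) then m else 0) = 0 from
      if_neg (by simp), add_zero]
    apply if_congr _ rfl rfl
    have hd : dcnt (m+1) (Fin.snoc w false) (m+1) = dcnt m w m + 1 := by
      rw [dcnt_snoc_top]; norm_num
    have hu : ucnt (m+1) (Fin.snoc w false) (m+1) = ucnt m w m := by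
      rw [ucnt_snoc_top]; norm_num
    rw [bal_snoc, endD_snoc, hd, hu]
    constructor
    · rintro ⟨⟨⟨h1, h2⟩, h3⟩, -⟩
      exact ⟨h1, h2, h3⟩
    · rintro ⟨h1, h2, h3⟩
      exact ⟨⟨⟨h1, h2⟩, h3⟩, rfl⟩
  rw [Finset.sum_congr rfl (fun w _ => hpt w)]
  by_cases hb : 1 ≤ b ∧ 2*b ≤ m+1
  · rw [if_pos hb, SS_eq_sum]
    apply Finset.sum_congr rfl
    intro w _
    apply if_congr _ rfl rfl
    have ht := cnt_total m w
    constructor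
    · rintro ⟨h1, h2, h3⟩
      exact ⟨h1, by omega⟩
    · rintro ⟨h1, h2⟩
      have := h1 m le_rfl
      exact ⟨h1, by omega, by omega⟩
  · rw [if_neg hb]
    apply Finset.sum_eq_zero
    intro w _
    apply if_neg
    rintro ⟨h1, h2, h3⟩
    have := cnt_total m w
    omega

lemma SS_succ (m b : ℕ) :
    SS (m+1) b = SS m b + (X^m - 1) * SD m b + SD (m+1) b := by
  rw [SS_eq_sum, sum_snoc_split]
  -- the false branch equals SD (m+1) b
  have hfalse : (∑ w : Fin m → Bool,
      if (bal (m+1) (Fin.snoc w false) ∧ dcnt (m+1) (Fin.snoc w false) (m+1) = b)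
        then (X : Polynomial ℚ) ^ mj (m+1) (Fin.snoc w false) else 0) = SD (m+1) b := by
    rw [SD_eq_sum, sum_snoc_split]
    have htrue0 : (∑ w : Fin m → Bool,
        if ((bal (m+1) (Fin.snoc w true) ∧ dcnt (m+1) (Fin.snoc w true) (m+1) = b)
            ∧ endD (m+1) (Fin.snoc w true))
          then (X : Polynomial ℚ) ^ mj (m+1) (Fin.snoc w true) else 0) = 0 := by
      apply Finset.sum_eq_zero
      intro w _
      apply if_neg
      rintro ⟨-, he⟩
      rw [endD_snoc] at he
      exact absurd he (by simp)
    rw [htrue0, zero_add]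
    apply Finset.sum_congr rfl
    intro w _
    apply if_congr _ rfl rfl
    rw [endD_snoc]
    simp
  rw [hfalse]
  congr 1
  -- the true branch equals SS m b + (X^m - 1) * SD m b
  have hsplit : ∀ w : Fin m → Bool,
      (if (bal (m+1) (Fin.snoc w true) ∧ dcnt (m+1) (Fin.snoc w true) (m+1) = b)
        then (X : Polynomial ℚ) ^ mj (m+1) (Fin.snoc w true) else 0)
      = (if ((bal m w ∧ dcnt m w m = b) ∧ endD m w)
          then (X : Polynomial ℚ) ^ (mj m w + m) else 0)
        + (if ((bal m w ∧ dcnt m w m = b) ∧ ¬ endD m w)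
          then (X : Polynomial ℚ) ^ mj m w else 0) := by
    intro w
    rw [mj_snoc]
    have hcond : (bal (m+1) (Fin.snoc w true) ∧ dcnt (m+1) (Fin.snoc w true) (m+1) = b)
        ↔ (bal m w ∧ dcnt m w m = b) := by
      have hd : dcnt (m+1) (Fin.snoc w true) (m+1) = dcnt m w m := by
        rw [dcnt_snoc_top]; norm_num
      have hu : ucnt (m+1) (Fin.snoc w true) (m+1) = ucnt m w m + 1 := by
        rw [ucnt_snoc_top]; norm_num
      rw [bal_snoc, hd, hu]
      constructor
      · rintro ⟨⟨h1, -⟩, h2⟩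
        exact ⟨h1, h2⟩
      · rintro ⟨h1, h2⟩
        have := h1 m le_rfl
        exact ⟨⟨h1, by omega⟩, h2⟩
    rw [if_congr hcond rfl rfl,
      show (if (endD m w ∧ (true : Bool) = true) then m else 0)
          = (if endD m w then m else 0) from if_congr (by simp) rfl rfl]
    by_cases he : endD m w
    · rw [if_pos he]
      by_cases hc : bal m w ∧ dcnt m w m = b
      · rw [if_pos hc, if_pos ⟨hc, he⟩, if_neg (fun h => h.2 he), add_zero]
      · rw [if_neg hc, if_neg (fun h => hc h.1), if_neg (fun h => hc h.1), add_zero]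
    · rw [if_neg he, add_zero]
      by_cases hc : bal m w ∧ dcnt m w m = b
      · rw [if_pos hc, if_neg (fun h => he h.2), if_pos ⟨hc, he⟩, zero_add]
      · rw [if_neg hc, if_neg (fun h => hc h.1), if_neg (fun h => hc h.1), add_zero]
  rw [Finset.sum_congr rfl (fun w _ => hsplit w), Finset.sum_add_distrib]
  have h1 : (∑ w : Fin m → Bool,
      if ((bal m w ∧ dcnt m w m = b) ∧ endD m w)
        then (X : Polynomial ℚ) ^ (mj m w + m) else 0) = X^m * SD m b := by
    rw [SD_eq_sum, Finset.mul_sum]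
    apply Finset.sum_congr rfl
    intro w _
    by_cases h : (bal m w ∧ dcnt m w m = b) ∧ endD m w
    · rw [if_pos h, if_pos h, pow_add]; ring
    · rw [if_neg h, if_neg h, mul_zero]
  have h2 : SS m b = SD m b + ∑ w : Fin m → Bool,
      (if ((bal m w ∧ dcnt m w m = b) ∧ ¬ endD m w)
        then (X : Polynomial ℚ) ^ mj m w else 0) := by
    rw [SS_eq_sum, SD_eq_sum, ← Finset.sum_add_distrib]
    apply Finset.sum_congr rfl
    intro w _
    by_cases hc : bal m w ∧ dcnt m w m = b
    · by_cases he : endD m w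
      · rw [if_pos hc, if_pos ⟨hc, he⟩, if_neg (by tauto), add_zero]
      · rw [if_pos hc, if_neg (by tauto), if_pos ⟨hc, he⟩, zero_add]
    · rw [if_neg hc, if_neg (by tauto), if_neg (by tauto), add_zero]
  rw [h1]
  linear_combination -h2
noncomputable def TP : ℕ → ℕ → Polynomial ℚ × Polynomial ℚ
  | 0, b => (if b = 0 then 1 else 0, if b = 0 then 1 else 0)
  | m+1, b =>
      ((TP m b).1 + (X^m - 1) * (TP m b).2
         + (if 1 ≤ b ∧ 2*b ≤ m+1 then (TP m (b-1)).1 else 0),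
       if 1 ≤ b ∧ 2*b ≤ m+1 then (TP m (b-1)).1 else 0)

lemma TP_zero (b : ℕ) : TP 0 b = (if b = 0 then 1 else 0, if b = 0 then 1 else 0) := rfl
lemma TP_succ (m b : ℕ) : TP (m+1) b
    = ((TP m b).1 + (X^m - 1) * (TP m b).2
         + (if 1 ≤ b ∧ 2*b ≤ m+1 then (TP m (b-1)).1 else 0),
       if 1 ≤ b ∧ 2*b ≤ m+1 then (TP m (b-1)).1 else 0) := rfl

lemma SS_TP : ∀ m b : ℕ, SS m b = (TP m b).1 ∧ SD m b = (TP m b).2 := by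
  intro m
  induction m with
  | zero =>
      intro b
      rw [TP_zero]
      exact ⟨SS_zero b, SD_zero b⟩
  | succ m ih =>
      intro b
      have hd : SD (m+1) b = (TP (m+1) b).2 := by
        rw [SD_succ, TP_succ]
        by_cases h : 1 ≤ b ∧ 2*b ≤ m+1
        · rw [if_pos h, if_pos h, (ih (b-1)).1]
        · rw [if_neg h, if_neg h]
      refine ⟨?_, hd⟩
      rw [SS_succ, TP_succ, (ih b).1, (ih b).2, hd, TP_succ]

lemma TP_snd_zero {m b : ℕ} (h : m < 2*b) : (TP m b).2 = 0 := by
  cases m with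
  | zero => rw [TP_zero]; exact if_neg (by omega)
  | succ k => rw [TP_succ]; exact if_neg (by omega)

lemma TP_snd_b0 (m : ℕ) : (TP m 0).2 = if m = 0 then 1 else 0 := by
  cases m with
  | zero => rw [TP_zero]
  | succ k => rw [TP_succ]; rw [if_neg (by omega), if_neg (by omega)]

lemma TP_closed : ∀ m : ℕ, ∀ b : ℕ,
    (2*b ≤ m → (TP m b).1 = scf m b) ∧ (m < 2*b → (TP m b).1 = 0) := by
  intro m
  induction m using Nat.strong_induction_on with
  | _ m ih =>
    match m with
    | 0 =>
        intro b
        constructor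
        · intro h
          have hb : b = 0 := by omega
          subst hb
          rw [TP_zero, scf_zero]; simp
        · intro h
          rw [TP_zero]
          exact if_neg (by omega)
    | m'+1 =>
        intro b
        constructor
        · intro h
          rcases Nat.eq_zero_or_pos b with hb0 | hb1
          · subst hb0
            rw [TP_succ, if_neg (by omega), TP_snd_b0,
              ((ih m' (by omega)) 0).1 (by omega), scf_zero, scf_zero]
            cases m' with
            | zero => simp
            | succ k => rw [if_neg (by omega)]; ring
          · rcases Nat.lt_or_ge m' (2*b) with hm' | hm'
            · -- 2b = m'+1
              have h2b : 2*b = m'+1 := by omega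
              rw [TP_succ, ((ih m' (by omega)) b).2 (by omega), TP_snd_zero (by omega),
                if_pos ⟨hb1, by omega⟩, ((ih m' (by omega)) (b-1)).1 (by omega)]
              have h5 := I2' b hb1
              rw [h2b, show m'+1-1 = m' by omega] at h5
              rw [h5]
              show (0 : Polynomial ℚ) + (X ^ m' - 1) * 0 + scf m' (b - 1) = scf m' (b - 1)
              ring
            · -- 2b ≤ m'
              rw [TP_succ, ((ih m' (by omega)) b).1 hm',
                if_pos ⟨hb1, by omega⟩, ((ih m' (by omega)) (b-1)).1 (by omega)]
              have hm2 : 2 ≤ m' := by omega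
              have hsnd : (TP m' b).2 = scf (m'-1) (b-1) := by
                match m', hm2, hm', h with
                | k+1, _, hm'2, h2 =>
                  rw [show k+1-1 = k by omega, TP_succ, if_pos ⟨hb1, by omega⟩,
                    ((ih k (by omega)) (b-1)).1 (by omega)]
              rw [hsnd, I1' m' b hb1 hm']
        · intro h
          rw [TP_succ, ((ih m' (by omega)) b).2 (by omega), TP_snd_zero (by omega),
            if_neg (by omega)]
          ring

lemma hX1 : (RatFunc.X : RatFunc ℚ) - 1 ≠ 0 := by
  have h : (RatFunc.X : RatFunc ℚ) - 1 = algebraMap (Polynomial ℚ) (RatFunc ℚ) (X - 1) := by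
    simp [map_sub]
  rw [h]
  simp only [ne_eq, map_eq_zero_iff _ (RatFunc.algebraMap_injective ℚ)]
  exact Polynomial.X_sub_C_ne_zero 1

lemma algebraMap_pq_mul (d : ℕ) :
    algebraMap (Polynomial ℚ) (RatFunc ℚ) (pq d) * (RatFunc.X - 1) = RatFunc.X ^ d - 1 := by
  have h := geom_sum_mul (Polynomial.X : Polynomial ℚ) d
  have h2 := congrArg (algebraMap (Polynomial ℚ) (RatFunc ℚ)) h
  simpa [pq, map_sub, map_mul, map_pow] using h2

lemma algebraMap_pq (d : ℕ) :
    algebraMap (Polynomial ℚ) (RatFunc ℚ) (pq d) = (RatFunc.X ^ d - 1) / (RatFunc.X - 1) := by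
  rw [eq_div_iff hX1]; exact algebraMap_pq_mul d

lemma SS_eq_scf (m b : ℕ) (h : 2*b ≤ m) : SS m b = scf m b :=
  (SS_TP m b).1.trans ((TP_closed m b).1 h)

lemma up_eq (n : ℕ) (w : Fin (2*n) → Bool) (k : ℕ) : upSteps n w k = ucnt (2*n) w k := rfl
lemma down_eq (n : ℕ) (w : Fin (2*n) → Bool) (k : ℕ) : downSteps n w k = dcnt (2*n) w k := rfl
lemma mj_eq (n : ℕ) (w : Fin (2*n) → Bool) : dyckMajorIndex n w = mj (2*n) w := rfl

lemma bridge (n : ℕ) : (dyckMajPoly n).map (Nat.castRingHom ℚ) = SS (2*n) n := by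
  unfold dyckMajPoly SS
  rw [Polynomial.map_sum]
  have hfil : Finset.univ.filter (IsDyckPath n)
      = Finset.univ.filter
          (fun w : Fin (2*n) → Bool => bal (2*n) w ∧ dcnt (2*n) w (2*n) = n) := by
    apply Finset.filter_congr
    intro w _
    constructor
    · rintro ⟨h1, h2⟩
      have ht := cnt_total (2*n) w
      have h2' : ucnt (2*n) w (2*n) = n := by rw [← up_eq]; exact h2
      refine ⟨fun k hk => ?_, by omega⟩
      have := h1 k hk
      rw [down_eq, up_eq] at this
      exact this
    · rintro ⟨h1, h2⟩
      have ht := cnt_total (2*n) w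
      constructor
      · intro k hk
        rw [down_eq, up_eq]
        exact h1 k hk
      · rw [up_eq]
        omega
  rw [hfil]
  apply Finset.sum_congr rfl
  intro w _
  rw [Polynomial.map_pow, Polynomial.map_X, mj_eq]

theorem stmt_1 (n : ℕ) (hn : 1 ≤ n) :
    ∏ i ∈ Finset.Icc 2 n,
        (((RatFunc.X : RatFunc ℚ) ^ (2 * n + 2 - i) - 1) / (RatFunc.X - 1)) /
          ((RatFunc.X ^ i - 1) / (RatFunc.X - 1)) =
      algebraMap (Polynomial ℚ) (RatFunc ℚ) ((dyckMajPoly n).map (Nat.castRingHom ℚ)) := by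
  obtain ⟨r, rfl⟩ : ∃ r, n = r + 1 := ⟨n-1, by omega⟩
  rw [bridge, SS_eq_scf (2*(r+1)) (r+1) le_rfl]
  rw [Finset.prod_congr rfl (fun i (_ : i ∈ Finset.Icc 2 (r+1)) => by
    rw [← algebraMap_pq (2*(r+1)+2-i), ← algebraMap_pq i] :
    ∀ i ∈ Finset.Icc 2 (r+1),
      ((RatFunc.X : RatFunc ℚ)^(2*(r+1)+2-i) - 1)/(RatFunc.X - 1)
        / ((RatFunc.X^i - 1)/(RatFunc.X - 1))
      = algebraMap (Polynomial ℚ) (RatFunc ℚ) (pq (2*(r+1)+2-i))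
        / algebraMap (Polynomial ℚ) (RatFunc ℚ) (pq i))]
  rw [Finset.prod_div_distrib, ← map_prod, ← map_prod]
  have hIcc : Finset.Icc 2 (r+1) = Finset.Ico 2 (r+2) := (Finset.Ico_add_one_right_eq_Icc 2 (r+1)).symm
  have hnum : ∏ i ∈ Finset.Icc 2 (r+1), pq (2*(r+1)+2-i) = gb (2*(r+1)) r * fac r := by
    rw [hIcc, Finset.prod_Ico_eq_prod_range, show r+2-2 = r by omega,
      prodpq_congr (fun i hi => by omega : ∀ i < r, 2*(r+1)+2-(2+i) = r+3+(r-1-i))]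
    have hrefl := Finset.prod_range_reflect (fun j => pq (r+3+j)) r
    rw [hrefl]
    have gf := gb_fact (2*(r+1)) r (by omega)
    rw [prodpq_congr (fun i hi => by omega : ∀ i < r, 2*(r+1) - r + 1 + i = r+3+i)] at gf
    exact gf.symm
  have hden : ∏ i ∈ Finset.Icc 2 (r+1), pq i = fac (r+1) := by
    rw [hIcc, Finset.prod_Ico_eq_prod_range, show r+2-2 = r by omega]
    unfold fac
    rw [Finset.prod_range_succ' (fun i => pq (i+1)) r, pq_one, mul_one]
    exact (prodpq_congr (fun i hi => by omega : ∀ i < r, 2+i = i+1+1)).symm ▸ rfl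
  rw [hnum, hden]
  rw [div_eq_iff ((map_ne_zero_iff _ (RatFunc.algebraMap_injective ℚ)).mpr (fac_ne_zero (r+1))),
    ← map_mul]
  exact congrArg _ (diamond r).symm
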